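/- Let M be a compact smooth manifold and E a smooth complex vector bundle of finite rank over M. Then the space Γ^∞(E) of smooth global sections of E is a finitely generated projective module over the algebra C^∞(M,ℂ) of smooth complex-valued functions on M. -/

import Mathlib

open Bundle Manifold
open scoped TensorProduct

local notation "∞" => (⊤ : ℕ∞)

noncomputable section

/-- Complex multiplication and addition are smooth over `ℝ`, so that the complex-valued smooth
functions on a real manifold form a (comm)ring. -/
instance : ContMDiffRing 𝓘(ℝ, ℂ) ∞ ℂ where
  contMDiff_add := by
    rw [contMDiff_iff]
    refine ⟨continuous_add, fun x y => ?_⟩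
    simp only [mfld_simps]
    exact contDiff_add.contDiffOn
  contMDiff_mul := by
    rw [contMDiff_iff]
    refine ⟨continuous_mul, fun x y => ?_⟩
    simp only [mfld_simps]
    exact contDiff_mul.contDiffOn

variable {EM : Type*} [NormedAddCommGroup EM] [NormedSpace ℝ EM] [FiniteDimensional ℝ EM]
  {HM : Type*} [TopologicalSpace HM] {IM : ModelWithCorners ℝ EM HM}
  {M : Type*} [TopologicalSpace M] [ChartedSpace HM M] [IsManifold IM ∞ M]
  [T2Space M] [SecondCountableTopology M] [CompactSpace M]

/-- The constant functions make the smooth complex-valued functions a `ℂ`-algebra. -/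
instance : Algebra ℂ C^∞⟮IM, M; 𝓘(ℝ, ℂ), ℂ⟯ :=
  RingHom.toAlgebra
    { toFun := fun c => ⟨fun _ => c, contMDiff_const⟩
      map_one' := rfl
      map_mul' := fun _ _ => rfl
      map_zero' := rfl
      map_add' := fun _ _ => rfl }

variable {F : Type*} [NormedAddCommGroup F] [NormedSpace ℂ F] [FiniteDimensional ℂ F]
  {V : M → Type*} [TopologicalSpace (TotalSpace F V)]
  [∀ x, AddCommGroup (V x)] [∀ x, Module ℂ (V x)] [∀ x, TopologicalSpace (V x)]
  [FiberBundle F V] [VectorBundle ℂ F V] [VectorBundle ℝ F V] [ContMDiffVectorBundle ∞ F V IM]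

/-- Pointwise scalar multiplication of a smooth section by a smooth function. -/
instance ContMDiffSection.instSMulSmoothMap :
    SMul C^∞⟮IM, M; 𝓘(ℝ, ℂ), ℂ⟯ Cₛ^∞⟮IM; F, V⟯ := by
  refine ⟨fun f s => ⟨fun x => f x • s x, ?_⟩⟩
  intro x₀
  have hs := s.contMDiff x₀
  have hf : ContMDiffAt IM 𝓘(ℝ, ℂ) ∞ f x₀ := f.contMDiff x₀
  rw [contMDiffAt_section] at hs ⊢
  set e := trivializationAt F V x₀
  have h1 : ContMDiffAt IM 𝓘(ℝ, F →L[ℝ] F) ∞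
      (fun x => (ContinuousLinearMap.lsmul ℝ ℂ (f x) : F →L[ℝ] F)) x₀ :=
    ContDiff.comp_contMDiffAt
      (g := ⇑(ContinuousLinearMap.lsmul ℝ ℂ : ℂ →L[ℝ] F →L[ℝ] F))
      (ContinuousLinearMap.contDiff _) hf
  refine (h1.clm_apply hs).congr_of_eventuallyEq ?_
  refine Filter.eventually_of_mem
    (e.open_baseSet.mem_nhds <| mem_baseSet_trivializationAt F V x₀) ?_
  intro x hx
  simp only [ContinuousLinearMap.lsmul_apply]
  exact (e.linear ℂ hx).2 (f x) (s x)

set_option linter.unusedSectionVars false in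
@[simp]
theorem ContMDiffSection.coe_smul_smoothMap (f : C^∞⟮IM, M; 𝓘(ℝ, ℂ), ℂ⟯)
    (s : Cₛ^∞⟮IM; F, V⟯) (x : M) : (f • s) x = f x • s x :=
  rfl

/-- The smooth sections of a smooth complex vector bundle form a module over the algebra of
smooth complex-valued functions on the base. -/
instance ContMDiffSection.instModuleSmoothMap :
    Module C^∞⟮IM, M; 𝓘(ℝ, ℂ), ℂ⟯ Cₛ^∞⟮IM; F, V⟯ where
  one_smul s := ContMDiffSection.ext fun x => one_smul ℂ (s x)
  mul_smul f g s := ContMDiffSection.ext fun x => mul_smul (f x) (g x) (s x)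
  smul_zero f := ContMDiffSection.ext fun x => smul_zero (f x)
  smul_add f s t := ContMDiffSection.ext fun x => smul_add (f x) (s x) (t x)
  add_smul f g s := ContMDiffSection.ext fun x => add_smul (f x) (g x) (s x)
  zero_smul s := ContMDiffSection.ext fun x => zero_smul ℂ (s x)

instance ContMDiffSection.instModuleComplex : Module ℂ Cₛ^∞⟮IM; F, V⟯ :=
  Module.compHom _ (algebraMap ℂ C^∞⟮IM, M; 𝓘(ℝ, ℂ), ℂ⟯)

instance ContMDiffSection.instIsScalarTowerComplex :
    IsScalarTower ℂ C^∞⟮IM, M; 𝓘(ℝ, ℂ), ℂ⟯ Cₛ^∞⟮IM; F, V⟯ :=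
  ⟨fun c f s => by
    show (c • f) • s = algebraMap ℂ C^∞⟮IM, M; 𝓘(ℝ, ℂ), ℂ⟯ c • f • s
    rw [Algebra.smul_def, mul_smul]⟩

/-! ### Auxiliary lemmas for the proof of Serre–Swan -/

/-- Multiplying a smooth `F`-valued map by a smooth complex function is smooth. -/
theorem contMDiffAt_csmul_aux {f : M → ℂ} {g : M → F} {x₀ : M}
    (hf : ContMDiffAt IM 𝓘(ℝ, ℂ) ∞ f x₀) (hg : ContMDiffAt IM 𝓘(ℝ, F) ∞ g x₀) :
    ContMDiffAt IM 𝓘(ℝ, F) ∞ (fun x => f x • g x) x₀ := by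
  have h1 : ContMDiffAt IM 𝓘(ℝ, F →L[ℝ] F) ∞
      (fun x => (ContinuousLinearMap.lsmul ℝ ℂ (f x) : F →L[ℝ] F)) x₀ :=
    ContDiff.comp_contMDiffAt
      (g := ⇑(ContinuousLinearMap.lsmul ℝ ℂ : ℂ →L[ℝ] F →L[ℝ] F))
      (ContinuousLinearMap.contDiff _) hf
  exact (h1.clm_apply hg).congr_of_eventuallyEq
    (Filter.Eventually.of_forall fun x => by simp)

/-- The coercion of a real smooth map to a complex smooth map. -/
theorem contMDiffAt_ofReal_aux {ρ : M → ℝ} {x₀ : M} (hρ : ContMDiffAt IM 𝓘(ℝ) ∞ ρ x₀) :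
    ContMDiffAt IM 𝓘(ℝ, ℂ) ∞ (fun x => (ρ x : ℂ)) x₀ :=
  ContDiff.comp_contMDiffAt (g := ⇑Complex.ofRealCLM) Complex.ofRealCLM.contDiff hρ

/-- A local frame section, cut off by a function supported in the base set of the
trivialization, is a smooth global section. -/
theorem contMDiff_frame_aux (e : Trivialization F (π F V)) [MemTrivializationAtlas e]
    (ρ : M → ℝ) (hρ : ContMDiff IM 𝓘(ℝ) ∞ ρ) (hρe : tsupport ρ ⊆ e.baseSet) (v : F) :
    ContMDiff IM (IM.prod 𝓘(ℝ, F)) ∞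
      (fun x => TotalSpace.mk' F x ((ρ x : ℂ) • e.symm x v)) := by
  intro x₀
  by_cases hx₀ : x₀ ∈ e.baseSet
  · rw [contMDiffAt_section]
    set e₀ := trivializationAt F V x₀ with he₀
    have hx₀' : x₀ ∈ e₀.baseSet := mem_baseSet_trivializationAt F V x₀
    have hcand : ContMDiffAt IM 𝓘(ℝ, F) ∞
        (fun x => (ρ x : ℂ) • (e.coordChangeL ℝ e₀ x v : F)) x₀ := by
      apply contMDiffAt_csmul_aux (contMDiffAt_ofReal_aux (hρ x₀))
      exact (contMDiffAt_coordChangeL hx₀ hx₀').clm_apply contMDiffAt_const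
    refine hcand.congr_of_eventuallyEq ?_
    filter_upwards [(e.open_baseSet.inter e₀.open_baseSet).mem_nhds ⟨hx₀, hx₀'⟩] with x hx
    have h1 : (e₀ ⟨x, (ρ x : ℂ) • e.symm x v⟩).2 = (ρ x : ℂ) • (e₀ ⟨x, e.symm x v⟩).2 :=
      (e₀.linear ℂ hx.2).map_smul _ _
    rw [h1, e.coordChangeL_apply e₀ hx]
  · have hx₀' : x₀ ∉ tsupport ρ := fun h => hx₀ (hρe h)
    refine ((Bundle.contMDiff_zeroSection ℝ V) x₀).congr_of_eventuallyEq ?_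
    filter_upwards [(isClosed_tsupport ρ).isOpen_compl.mem_nhds hx₀'] with y hy
    have h0 : ρ y = 0 := image_eq_zero_of_notMem_tsupport hy
    simp only [h0, Complex.ofReal_zero, zero_smul]
    rfl

/-- The coordinates of a smooth section in a trivialization, cut off by a function supported
in the base set, are smooth complex functions. -/
theorem contMDiff_coeff_aux (e : Trivialization F (π F V)) [MemTrivializationAtlas e]
    (ρ : M → ℝ) (hρ : ContMDiff IM 𝓘(ℝ) ∞ ρ) (hρe : tsupport ρ ⊆ e.baseSet)
    (φ : F →L[ℝ] ℂ) (s : Cₛ^∞⟮IM; F, V⟯) :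
    ContMDiff IM 𝓘(ℝ, ℂ) ∞ (fun x => (ρ x : ℂ) * φ ((e ⟨x, s x⟩).2)) := by
  intro x₀
  by_cases hx₀ : x₀ ∈ e.baseSet
  · have hs : ContMDiffAt IM (IM.prod 𝓘(ℝ, F)) ∞ (fun x => TotalSpace.mk' F x (s x)) x₀ :=
      s.contMDiff x₀
    have h2 : ContMDiffAt IM 𝓘(ℝ, F) ∞ (fun x => (e ⟨x, s x⟩).2) x₀ :=
      ((e.contMDiffAt_iff (by rwa [e.mem_source])).1 hs).2
    have h3 : ContMDiffAt IM 𝓘(ℝ, ℂ) ∞ (fun x => φ ((e ⟨x, s x⟩).2)) x₀ :=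
      ContDiff.comp_contMDiffAt (g := ⇑φ) φ.contDiff h2
    exact (contMDiffAt_ofReal_aux (hρ x₀)).mul h3
  · have hx₀' : x₀ ∉ tsupport ρ := fun h => hx₀ (hρe h)
    refine (contMDiffAt_const (c := (0 : ℂ))).congr_of_eventuallyEq ?_
    filter_upwards [(isClosed_tsupport ρ).isOpen_compl.mem_nhds hx₀'] with y hy
    rw [image_eq_zero_of_notMem_tsupport hy]
    simp

/-- **Serre–Swan (smooth, compact case)**: the module of smooth global sections of a smooth
complex vector bundle of finite rank over a compact smooth manifold is a finitely generated
projective module over the algebra of smooth complex-valued functions. -/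
theorem sections_finite_projective :
    Module.Finite C^∞⟮IM, M; 𝓘(ℝ, ℂ), ℂ⟯ Cₛ^∞⟮IM; F, V⟯ ∧
      Module.Projective C^∞⟮IM, M; 𝓘(ℝ, ℂ), ℂ⟯ Cₛ^∞⟮IM; F, V⟯ := by
  classical
  -- a finite cover of `M` by base sets of trivializations
  obtain ⟨t, ht⟩ : ∃ t : Finset M, Set.univ ⊆ ⋃ j ∈ t, (trivializationAt F V j).baseSet :=
    isCompact_univ.elim_finite_subcover
      (fun j : M => (trivializationAt F V j).baseSet)
      (fun j => (trivializationAt F V j).open_baseSet)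
      (fun x _ => Set.mem_iUnion.2 ⟨x, mem_baseSet_trivializationAt F V x⟩)
  -- a smooth partition of unity subordinate to this cover
  obtain ⟨f, hf⟩ := SmoothPartitionOfUnity.exists_isSubordinate (ι := t) IM isClosed_univ
      (fun j => (trivializationAt F V (j : M)).baseSet)
      (fun j => (trivializationAt F V (j : M)).open_baseSet)
      (by
        intro x _
        have hx := ht (Set.mem_univ x)
        rw [Set.mem_iUnion₂] at hx
        obtain ⟨j, hj, h⟩ := hx
        exact Set.mem_iUnion.2 ⟨⟨j, hj⟩, h⟩)
  set e : t → Trivialization F (π F V) := fun j => trivializationAt F V (j : M) with he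
  have hfe : ∀ j : t, tsupport (f j) ⊆ (e j).baseSet := fun j => hf j
  have hf0 : ∀ (j : t) (x : M), x ∉ (e j).baseSet → f j x = 0 := fun j x hx =>
    image_eq_zero_of_notMem_tsupport fun h => hx (hfe j h)
  -- the sum of squares, a positive smooth function
  set g0 : M → ℝ := fun x => ∑ j : t, f j x * f j x with hg0
  have hsum1 : ∀ x : M, ∑ j : t, f j x = 1 := fun x => by
    rw [← finsum_eq_sum_of_fintype]; exact f.sum_eq_one (Set.mem_univ x)
  have hg0pos : ∀ x, 0 < g0 x := by
    intro x
    have hex : ∃ j : t, f j x ≠ 0 := by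
      by_contra h
      push_neg at h
      have h1 := hsum1 x
      rw [Finset.sum_eq_zero (fun j _ => h j)] at h1
      exact one_ne_zero h1.symm
    obtain ⟨j, hj⟩ := hex
    refine Finset.sum_pos' (fun i _ => mul_self_nonneg _) ⟨j, Finset.mem_univ j, ?_⟩
    have : 0 < f j x := lt_of_le_of_ne (f.nonneg j x) (Ne.symm hj)
    exact mul_pos this this
  have hg0smooth : ContMDiff IM 𝓘(ℝ) ∞ g0 :=
    contMDiff_finset_sum fun j _ => (f j).contMDiff.mul (f j).contMDiff
  -- the normalized coefficients
  set h : t → M → ℝ := fun j x => f j x / g0 x with hh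
  have hhsmooth : ∀ j : t, ContMDiff IM 𝓘(ℝ) ∞ (h j) := fun j =>
    (f j).contMDiff.div₀ hg0smooth fun x => (hg0pos x).ne'
  have hhsupp : ∀ j : t, tsupport (h j) ⊆ (e j).baseSet := fun j =>
    subset_trans (closure_mono fun x hx => by
      simp only [Function.mem_support, hh] at hx ⊢
      intro hfx
      exact hx (by rw [hfx, zero_div])) (hfe j)
  have hh0 : ∀ (j : t) (x : M), x ∉ (e j).baseSet → h j x = 0 := fun j x hx => by
    simp only [hh, hf0 j x hx, zero_div]
  -- a basis of the fiber and its coordinate functionals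
  set k := Module.finrank ℂ F with hk
  set b : Module.Basis (Fin k) ℂ F := Module.finBasis ℂ F with hb
  set φ : Fin k → (F →L[ℝ] ℂ) := fun v =>
    (LinearMap.toContinuousLinearMap (b.coord v)).restrictScalars ℝ with hφ
  have hφapp : ∀ (v : Fin k) (w : F), φ v w = b.coord v w := fun v w => rfl
  -- the generating sections
  set σ : t × Fin k → Cₛ^∞⟮IM; F, V⟯ := fun p =>
    ⟨fun x => (f p.1 x : ℂ) • (e p.1).symm x (b p.2),
      contMDiff_frame_aux (e p.1) (f p.1) (f p.1).contMDiff (hfe p.1) (b p.2)⟩ with hσ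
  have hσapp : ∀ (p : t × Fin k) (x : M),
      σ p x = (f p.1 x : ℂ) • (e p.1).symm x (b p.2) := fun p x => rfl
  -- the coefficient linear map
  set c : Cₛ^∞⟮IM; F, V⟯ →ₗ[C^∞⟮IM, M; 𝓘(ℝ, ℂ), ℂ⟯] (t × Fin k → C^∞⟮IM, M; 𝓘(ℝ, ℂ), ℂ⟯) :=
    { toFun := fun s => fun p =>
        ⟨fun x => (h p.1 x : ℂ) * φ p.2 ((e p.1 ⟨x, s x⟩).2),
          contMDiff_coeff_aux (e p.1) (h p.1) (hhsmooth p.1) (hhsupp p.1) (φ p.2) s⟩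
      map_add' := by
        intro s₁ s₂
        funext p
        ext x
        show (h p.1 x : ℂ) * φ p.2 ((e p.1 ⟨x, (s₁ + s₂) x⟩).2) =
          (h p.1 x : ℂ) * φ p.2 ((e p.1 ⟨x, s₁ x⟩).2) +
          (h p.1 x : ℂ) * φ p.2 ((e p.1 ⟨x, s₂ x⟩).2)
        by_cases hx : x ∈ (e p.1).baseSet
        · have hlin : (e p.1 ⟨x, s₁ x + s₂ x⟩).2 =
              (e p.1 ⟨x, s₁ x⟩).2 + (e p.1 ⟨x, s₂ x⟩).2 := ((e p.1).linear ℂ hx).map_add _ _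
          rw [ContMDiffSection.coe_add, Pi.add_apply, hlin, map_add]
          ring
        · rw [hh0 p.1 x hx]
          push_cast
          ring
      map_smul' := by
        intro a s
        funext p
        ext x
        show (h p.1 x : ℂ) * φ p.2 ((e p.1 ⟨x, (a • s) x⟩).2) =
          a x * ((h p.1 x : ℂ) * φ p.2 ((e p.1 ⟨x, s x⟩).2))
        rw [ContMDiffSection.coe_smul_smoothMap]
        by_cases hx : x ∈ (e p.1).baseSet
        · have hlin : (e p.1 ⟨x, a x • s x⟩).2 = a x • (e p.1 ⟨x, s x⟩).2 :=
            ((e p.1).linear ℂ hx).map_smul _ _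
          rw [hlin, hφapp, hφapp, map_smul, smul_eq_mul]
          ring
        · rw [hh0 p.1 x hx]
          push_cast
          ring } with hc
  -- the combination linear map
  set Φ : (t × Fin k → C^∞⟮IM, M; 𝓘(ℝ, ℂ), ℂ⟯) →ₗ[C^∞⟮IM, M; 𝓘(ℝ, ℂ), ℂ⟯] Cₛ^∞⟮IM; F, V⟯ :=
    { toFun := fun u => ∑ p : t × Fin k, u p • σ p
      map_add' := by
        intro u v
        rw [← Finset.sum_add_distrib]
        exact Finset.sum_congr rfl fun p _ => by rw [Pi.add_apply, add_smul]
      map_smul' := by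
        intro a u
        rw [RingHom.id_apply, Finset.smul_sum]
        exact Finset.sum_congr rfl fun p _ => by rw [Pi.smul_apply, smul_eq_mul, mul_smul] } with hΦ
  -- the splitting identity
  have hsplit : ∀ s : Cₛ^∞⟮IM; F, V⟯, Φ (c s) = s := by
    intro s
    ext x
    show (↑(∑ p : t × Fin k, c s p • σ p) : ∀ y, V y) x = s x
    have hev : (↑(∑ p : t × Fin k, c s p • σ p) : ∀ y, V y) x =
        ∑ p : t × Fin k, (c s p) x • (σ p) x := by
      have h1 := congrFun
        (map_sum (ContMDiffSection.coeAddHom IM F ∞ V) (fun p => c s p • σ p) Finset.univ) x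
      simp only [ContMDiffSection.coeAddHom, AddMonoidHom.coe_mk, ZeroHom.coe_mk,
        Finset.sum_apply, ContMDiffSection.coe_smul_smoothMap] at h1
      exact h1
    rw [hev]
    have hterm : ∀ p : t × Fin k, (c s p) x • (σ p) x =
        (((h p.1 x : ℂ) * φ p.2 ((e p.1 ⟨x, s x⟩).2)) * (f p.1 x : ℂ)) •
          (e p.1).symm x (b p.2) := fun p => by
      rw [hσapp, smul_smul]
      rfl
    rw [Finset.sum_congr rfl fun p _ => hterm p, Fintype.sum_prod_type]
    have hinner : ∀ j : t, (∑ v : Fin k,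
        (((h j x : ℂ) * φ v ((e j ⟨x, s x⟩).2)) * (f j x : ℂ)) • (e j).symm x (b v)) =
        ((f j x * h j x : ℝ) : ℂ) • s x := by
      intro j
      by_cases hx : x ∈ (e j).baseSet
      · set w := (e j ⟨x, s x⟩).2 with hw
        set L := (e j).symmₗ ℂ x with hL
        have hcoeL : ⇑L = (e j).symm x := (e j).coe_symmₗ (R := ℂ) hx
        have hlin : ∑ v : Fin k, b.coord v w • (e j).symm x (b v) = (e j).symm x w := by
          rw [← hcoeL]
          calc ∑ v : Fin k, b.coord v w • L (b v)
              = ∑ v : Fin k, L (b.coord v w • b v) :=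
                Finset.sum_congr rfl fun v _ => (map_smul L _ _).symm
            _ = L (∑ v : Fin k, b.coord v w • b v) := (map_sum L _ _).symm
            _ = L w := by
                congr 1
                simp only [Module.Basis.coord_apply]
                exact b.sum_repr w
        calc (∑ v : Fin k,
            (((h j x : ℂ) * φ v w) * (f j x : ℂ)) • (e j).symm x (b v))
            = ((f j x * h j x : ℝ) : ℂ) • ∑ v : Fin k, b.coord v w • (e j).symm x (b v) := by
              rw [Finset.smul_sum]
              refine Finset.sum_congr rfl fun v _ => ?_
              rw [hφapp, smul_smul]
              congr 1
              push_cast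
              ring
          _ = ((f j x * h j x : ℝ) : ℂ) • s x := by
              rw [hlin, hw, (e j).symm_apply_apply_mk hx (s x)]
      · have h₁ : f j x = 0 := hf0 j x hx
        simp [h₁]
    rw [Finset.sum_congr rfl fun j _ => hinner j, ← Finset.sum_smul]
    have : (∑ j : t, ((f j x * h j x : ℝ) : ℂ)) = 1 := by
      rw [← Complex.ofReal_sum]
      norm_cast
      simp only [hh]
      rw [show (∑ j : t, f j x * (f j x / g0 x)) = (∑ j : t, f j x * f j x) / g0 x by
        rw [Finset.sum_div]; exact Finset.sum_congr rfl fun j _ => (mul_div_assoc _ _ _).symm]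
      exact div_self (hg0pos x).ne'
    rw [this, one_smul]
  constructor
  · exact Module.Finite.of_surjective Φ fun s => ⟨c s, hsplit s⟩
  · exact Module.Projective.of_split c Φ (LinearMap.ext hsplit)

end
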